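/- Let M be a locally compact group and s a contracting automorphism of M (for every neighborhood V of 1 and compact K ⊆ M, s^n(K) ⊆ V for large n). Assume M is totally disconnected. Then the map f(g) = g · s(g)⁻¹ is a self-homeomorphism of M, with inverse F(g) = g·s(g)·s²(g)·⋯ (the infinite product converging). -/

import Mathlib

open Filter Topology Set

section Aux

variable {M : Type*} [Group M] [TopologicalSpace M] [IsTopologicalGroup M]

open scoped Pointwise

/-- Variant of `TopologicalGroup.exist_mul_closure_nhd` for a compact open set in a
possibly non-compact group. -/
theorem stmt13_exist_mul_closure_nhd {W : Set M} (Wcpt : IsCompact W) (Wopen : IsOpen W) :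
    ∃ T ∈ 𝓝 (1 : M), W * T ⊆ W := by
  apply Wcpt.induction_on (p := fun S ↦ ∃ T ∈ 𝓝 (1 : M), S * T ⊆ W)
    ⟨Set.univ, by simp only [Filter.univ_mem, Set.empty_mul, Set.empty_subset, and_self]⟩
    (fun _ _ huv ⟨T, hT, mem⟩ ↦ ⟨T, hT, (Set.mul_subset_mul_right huv).trans mem⟩)
    (fun U V ⟨T₁, hT₁, mem1⟩ ⟨T₂, hT₂, mem2⟩ ↦ ⟨T₁ ∩ T₂, Filter.inter_mem hT₁ hT₂, by
      rw [Set.union_mul]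
      exact Set.union_subset ((Set.mul_subset_mul_left Set.inter_subset_left).trans mem1)
        ((Set.mul_subset_mul_left Set.inter_subset_right).trans mem2)⟩)
  intro x memW
  have : (x, 1) ∈ (fun p : M × M ↦ p.1 * p.2) ⁻¹' W := by simp [memW]
  rcases isOpen_prod_iff.mp (continuous_mul.isOpen_preimage W Wopen) x 1 this with
    ⟨U, V, Uopen, Vopen, xmemU, onememV, prodsub⟩
  have h6 : U * V ⊆ W := Set.mul_subset_iff.mpr (fun _ hx _ hy ↦ prodsub (Set.mk_mem_prod hx hy))
  exact ⟨U ∩ W, ⟨U, Uopen.mem_nhds xmemU, W, fun _ a ↦ a, rfl⟩,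
    V, Vopen.mem_nhds onememV, fun _ a ↦ h6 ((Set.mul_subset_mul_right Set.inter_subset_left) a)⟩

/-- Van Dantzig's theorem: in a totally disconnected locally compact group, every
neighborhood of `1` contains a compact open subgroup. -/
theorem stmt13_vanDantzig [LocallyCompactSpace M] [TotallyDisconnectedSpace M] [T2Space M]
    {U : Set M} (hU : U ∈ 𝓝 (1 : M)) :
    ∃ H : Subgroup M, IsOpen (H : Set M) ∧ IsCompact (H : Set M) ∧ (H : Set M) ⊆ U := by
  obtain ⟨K, hKnhds, hKU, hKcpt⟩ := local_compact_nhds hU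
  obtain ⟨W, hWclopen, h1W, hWK⟩ :=
    (loc_compact_Haus_tot_disc_of_zero_dim (H := M)).mem_nhds_iff.mp hKnhds
  have Wcpt : IsCompact W := hKcpt.of_isClosed_subset hWclopen.isClosed hWK
  have Wopen : IsOpen W := hWclopen.isOpen
  -- find a small symmetric open neighborhood T of 1 with W * T ⊆ W
  obtain ⟨S, Smem, Smul⟩ := stmt13_exist_mul_closure_nhd Wcpt Wopen
  rcases mem_nhds_iff.mp Smem with ⟨U', U'subS, U'open, oneU'⟩
  set T : Set M := U' ∩ U'⁻¹ with hT
  have Topen : IsOpen T := U'open.inter U'open.inv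
  have Tone : (1 : M) ∈ T := ⟨oneU', by simp [oneU']⟩
  have Tinv : T⁻¹ = T := by simp [hT, Set.inter_comm U' U'⁻¹]
  have Tmul : W * T ⊆ W := fun a ha ↦
    Smul (Set.mul_subset_mul_left (Set.inter_subset_left.trans U'subS) ha)
  -- the subgroup generated as the union of powers of T
  let Sg : Subgroup M :=
    { carrier := ⋃ n, T ^ (n + 1)
      mul_mem' := fun ha hb ↦ by
        rcases Set.mem_iUnion.mp ha with ⟨k, hk⟩
        rcases Set.mem_iUnion.mp hb with ⟨l, hl⟩
        apply Set.mem_iUnion.mpr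
        exact ⟨k + 1 + l, by rw [add_assoc, pow_add]; exact Set.mul_mem_mul hk hl⟩
      one_mem' := Set.mem_iUnion.mpr ⟨0, by simpa using Tone⟩
      inv_mem' := fun ha ↦ by
        rcases Set.mem_iUnion.mp ha with ⟨k, hk⟩
        apply Set.mem_iUnion.mpr
        refine ⟨k, ?_⟩
        rw [← Tinv]
        simpa only [inv_pow, Set.mem_inv, inv_inv] using hk }
  have Sgopen : IsOpen (Sg : Set M) := by
    refine isOpen_iUnion fun n ↦ ?_
    rw [pow_succ]
    exact Topen.mul_left
  have mulTpow : ∀ n : ℕ, W * T ^ (n + 1) ⊆ W := by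
    intro n
    induction' n with n ih
    · simpa using Tmul
    · rw [pow_succ, ← mul_assoc]
      exact (Set.mul_subset_mul_right ih).trans Tmul
  have SgW : (Sg : Set M) ⊆ W := by
    intro x hx
    rcases Set.mem_iUnion.mp hx with ⟨n, hn⟩
    exact mulTpow n ⟨1, h1W, x, hn, one_mul x⟩
  have Sgclosed : IsClosed (Sg : Set M) := Sg.isClosed_of_isOpen Sgopen
  exact ⟨Sg, Sgopen, Wcpt.of_isClosed_subset Sgclosed SgW,
    SgW.trans (hWK.trans hKU)⟩

variable (s : M ≃* M)

/-- Partial products `g · s(g) · ⋯ · sⁿ⁻¹(g)`. -/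
noncomputable def stmt13P (n : ℕ) (g : M) : M :=
  ((List.range n).map (fun i => (⇑s)^[i] g)).prod

theorem stmt13P_zero (g : M) : stmt13P s 0 g = 1 := rfl

theorem stmt13P_succ (n : ℕ) (g : M) :
    stmt13P s (n + 1) g = stmt13P s n g * (⇑s)^[n] g := by
  rw [stmt13P, List.range_succ, List.map_append, List.prod_append]
  simp [stmt13P]

theorem stmt13P_continuous (hs : Continuous s) (n : ℕ) :
    Continuous (fun g => stmt13P s n g) := by
  induction' n with n ih
  · simpa [stmt13P_zero] using continuous_const
  · simp only [stmt13P_succ]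
    exact ih.mul (hs.iterate n)

theorem stmt13_mul_s_P (n : ℕ) (g : M) :
    g * s (stmt13P s n g) = stmt13P s (n + 1) g := by
  have hs_prod : ∀ l : List M, s l.prod = (l.map ⇑s).prod := by
    intro l
    induction' l with a l ih
    · simp
    · simp [ih]
  have hfun : (⇑s ∘ fun i => (⇑s)^[i] g) = ((fun i => (⇑s)^[i] g) ∘ Nat.succ) := by
    funext i
    simp [Function.comp, Function.iterate_succ_apply']
  rw [stmt13P, hs_prod, List.map_map, hfun, stmt13P, List.range_succ_eq_map, List.map_cons,
    List.prod_cons, List.map_map, Function.iterate_zero_apply]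

/-- Tail estimate: once all iterates from index `N` on lie in a subgroup `H`, all partial
products from index `N` on lie in the coset `stmt13P s N g · H`. -/
theorem stmt13_tail (H : Subgroup M) {N : ℕ} {g : M}
    (hN : ∀ m ≥ N, (⇑s)^[m] g ∈ H) :
    ∀ m ≥ N, (stmt13P s N g)⁻¹ * stmt13P s m g ∈ H := by
  intro m hm
  induction' m, hm using Nat.le_induction with m hm ih
  · simpa using H.one_mem
  · rw [stmt13P_succ, ← mul_assoc]
    exact H.mul_mem ih (hN m hm)

end Aux

/-- for a contracting automorphism `s` of a totally disconnected locally
compact group `M`, the map `f(g) = g·s(g)⁻¹` is a self-homeomorphism of `M`, with inverse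
`F(g) = g·s(g)·s²(g)·⋯` (the infinite product converging). -/
theorem stmt13 {M : Type*} [Group M] [TopologicalSpace M] [IsTopologicalGroup M]
    [LocallyCompactSpace M] [TotallyDisconnectedSpace M]
    (s : M ≃* M) (hs : Continuous s) (hs' : Continuous s.symm)
    (hcontr : ∀ K : Set M, IsCompact K → ∀ U ∈ nhds (1 : M),
      ∃ N : ℕ, ∀ n ≥ N, ∀ g ∈ K, (⇑s)^[n] g ∈ U) :
    ∃ F : M → M, Continuous F ∧
      (∀ g : M, Filter.Tendsto
        (fun n : ℕ => ((List.range n).map (fun i => (⇑s)^[i] g)).prod)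
        Filter.atTop (nhds (F g))) ∧
      (∀ g : M, F g * (s (F g))⁻¹ = g) ∧
      (∀ g : M, F (g * (s g)⁻¹) = g) := by
  haveI : T2Space M := by
    rw [IsTopologicalGroup.t2Space_iff_one_closed]
    rw [← totallyDisconnectedSpace_iff_connectedComponent_singleton.mp
      ‹TotallyDisconnectedSpace M› 1]
    exact isClosed_connectedComponent
  -- convergence of the partial products
  have key : ∀ g : M, ∃ x : M, Filter.Tendsto (fun n => stmt13P s n g) Filter.atTop (𝓝 x) := by
    intro g
    obtain ⟨H₀, H₀open, H₀cpt, -⟩ := stmt13_vanDantzig (M := M) Filter.univ_mem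
    obtain ⟨N₀, hN₀⟩ := hcontr {g} isCompact_singleton _ (H₀open.mem_nhds H₀.one_mem)
    have hN₀' : ∀ m ≥ N₀, (⇑s)^[m] g ∈ H₀ := fun m hm => hN₀ m hm g rfl
    set Q : Set M := (fun h => stmt13P s N₀ g * h) '' (H₀ : Set M) with hQ
    have Qcpt : IsCompact Q := H₀cpt.image (continuous_mul_left _)
    set y : ℕ → M := fun k => stmt13P s (N₀ + k) g with hy
    have hyQ : ∀ k, y k ∈ Q := by
      intro k
      exact ⟨(stmt13P s N₀ g)⁻¹ * stmt13P s (N₀ + k) g,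
        stmt13_tail s H₀ hN₀' _ (Nat.le_add_right _ _), by group; rfl⟩
    have hle : Filter.map y Filter.atTop ≤ Filter.principal Q :=
      Filter.le_principal_iff.mpr (Filter.mem_map.mpr
        (Filter.Eventually.of_forall hyQ))
    obtain ⟨x, -, hx⟩ := Qcpt.exists_clusterPt hle
    refine ⟨x, ?_⟩
    rw [Filter.tendsto_def]
    intro W hW
    have h1 : (fun z => x * z) ⁻¹' W ∈ 𝓝 (1 : M) := by
      have : Filter.Tendsto (fun z => x * z) (𝓝 1) (𝓝 x) := by
        simpa using (continuous_mul_left x).tendsto (1 : M)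
      exact this hW
    obtain ⟨H, Hopen, -, hHW⟩ := stmt13_vanDantzig (M := M) h1
    obtain ⟨N, hN⟩ := hcontr {g} isCompact_singleton _ (Hopen.mem_nhds H.one_mem)
    have hN' : ∀ m ≥ N, (⇑s)^[m] g ∈ H := fun m hm => hN m hm g rfl
    -- use the cluster point to find a partial product in the coset x • H
    have hUopen : IsOpen {z : M | x⁻¹ * z ∈ H} := Hopen.preimage (continuous_mul_left x⁻¹)
    have hxU : x ∈ {z : M | x⁻¹ * z ∈ H} := by simp [H.one_mem]
    have hmem : y '' (Set.Ici N) ∈ Filter.map y Filter.atTop :=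
      Filter.mem_map.mpr (Filter.mem_of_superset (Filter.mem_atTop N)
        (fun k hk => Set.subset_preimage_image y _ hk))
    obtain ⟨z, hzU, k, hkN, rfl⟩ := clusterPt_iff_nonempty.mp hx (hUopen.mem_nhds hxU) hmem
    -- now every partial product with index ≥ N₀ + k lies in x • H ⊆ W
    have hn₁ : N₀ + k ≥ N := le_trans hkN (Nat.le_add_left _ _)
    refine Filter.mem_of_superset (Filter.mem_atTop (N₀ + k)) ?_
    intro m hm
    have h2 : (stmt13P s (N₀ + k) g)⁻¹ * stmt13P s m g ∈ H := by
      have := stmt13_tail s H (N := N₀ + k) (g := g)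
        (fun j hj => hN' j (le_trans hn₁ hj)) m hm
      exact this
    have h3 : x⁻¹ * stmt13P s m g ∈ H := by
      have := H.mul_mem hzU h2
      simpa [mul_assoc, hy] using this
    have := hHW h3
    simpa [mul_assoc] using this
  choose F hF using key
  have hFtendsto : ∀ g : M, Filter.Tendsto
      (fun n : ℕ => ((List.range n).map (fun i => (⇑s)^[i] g)).prod)
      Filter.atTop (𝓝 (F g)) := hF
  refine ⟨F, ?_, hFtendsto, ?_, ?_⟩
  · -- continuity of F
    rw [continuous_iff_continuousAt]
    intro g₀
    rw [ContinuousAt, Filter.tendsto_def]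
    intro W hW
    have h1 : (fun z => F g₀ * z) ⁻¹' W ∈ 𝓝 (1 : M) := by
      have : Filter.Tendsto (fun z => F g₀ * z) (𝓝 1) (𝓝 (F g₀)) := by
        simpa using (continuous_mul_left (F g₀)).tendsto (1 : M)
      exact this hW
    obtain ⟨H, Hopen, -, hHW⟩ := stmt13_vanDantzig (M := M) h1
    obtain ⟨C, Ccpt, Cnhds⟩ := exists_compact_mem_nhds g₀
    obtain ⟨N, hN⟩ := hcontr C Ccpt _ (Hopen.mem_nhds H.one_mem)
    have Hclosed : IsClosed (H : Set M) := H.isClosed_of_isOpen Hopen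
    have claim : ∀ g ∈ C, (stmt13P s N g)⁻¹ * F g ∈ H := by
      intro g hg
      have hclosed : IsClosed {z : M | (stmt13P s N g)⁻¹ * z ∈ H} :=
        Hclosed.preimage (continuous_mul_left _)
      refine hclosed.mem_of_tendsto (hF g) ?_
      filter_upwards [Filter.eventually_ge_atTop N] with m hm
      exact stmt13_tail s H (fun j hj => hN j hj g hg) m hm
    set V : Set M := C ∩ {g : M | (stmt13P s N g₀)⁻¹ * stmt13P s N g ∈ H} with hV
    have hVnhds : V ∈ 𝓝 g₀ := by
      refine Filter.inter_mem Cnhds ?_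
      have : IsOpen {g : M | (stmt13P s N g₀)⁻¹ * stmt13P s N g ∈ H} :=
        Hopen.preimage ((continuous_mul_left _).comp (stmt13P_continuous s hs N))
      exact this.mem_nhds (by simp [H.one_mem])
    refine Filter.mem_of_superset hVnhds ?_
    rintro g ⟨hgC, hgP⟩
    have h2 : (F g₀)⁻¹ * F g ∈ H := by
      have e : (F g₀)⁻¹ * F g
          = ((stmt13P s N g₀)⁻¹ * F g₀)⁻¹ * (((stmt13P s N g₀)⁻¹ * stmt13P s N g)
            * ((stmt13P s N g)⁻¹ * F g)) := by group
      rw [e]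
      exact H.mul_mem (H.inv_mem (claim g₀ (mem_of_mem_nhds Cnhds)))
        (H.mul_mem hgP (claim g hgC))
    have := hHW h2
    simpa [mul_assoc] using this
  · -- F g * (s (F g))⁻¹ = g
    intro g
    have h1 : Filter.Tendsto (fun n => stmt13P s (n + 1) g) Filter.atTop (𝓝 (F g)) :=
      (hF g).comp (Filter.tendsto_add_atTop_nat 1)
    have h2 : Filter.Tendsto (fun n => g * s (stmt13P s n g)) Filter.atTop
        (𝓝 (g * s (F g))) :=
      (((hs.tendsto (F g)).comp (hF g)).const_mul g)
    have h3 : (fun n => g * s (stmt13P s n g)) = fun n => stmt13P s (n + 1) g := by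
      funext n; exact stmt13_mul_s_P s n g
    rw [h3] at h2
    have h4 : F g = g * s (F g) := tendsto_nhds_unique h1 h2
    rw [mul_inv_eq_iff_eq_mul]
    exact h4
  · -- F (g * (s g)⁻¹) = g
    intro g
    have hiter_mul : ∀ (n : ℕ) (a b : M), (⇑s)^[n] (a * b) = (⇑s)^[n] a * (⇑s)^[n] b := by
      intro n
      induction' n with n ih
      · intro a b; simp
      · intro a b
        rw [Function.iterate_succ_apply, map_mul, ih, ← Function.iterate_succ_apply,
          ← Function.iterate_succ_apply]
    have hiter_inv : ∀ (n : ℕ) (a : M), (⇑s)^[n] a⁻¹ = ((⇑s)^[n] a)⁻¹ := by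
      intro n
      induction' n with n ih
      · intro a; simp
      · intro a
        rw [Function.iterate_succ_apply, map_inv, ih, ← Function.iterate_succ_apply]
    have tele : ∀ n : ℕ, stmt13P s n (g * (s g)⁻¹) = g * ((⇑s)^[n] g)⁻¹ := by
      intro n
      induction' n with n ih
      · simp [stmt13P_zero]
      · rw [stmt13P_succ, ih, hiter_mul, hiter_inv]
        have : (⇑s)^[n] (s g) = (⇑s)^[n + 1] g := (Function.iterate_succ_apply (⇑s) n g).symm
        rw [this]
        group
    have hone : Filter.Tendsto (fun n => (⇑s)^[n] g) Filter.atTop (𝓝 (1 : M)) := by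
      rw [Filter.tendsto_def]
      intro U hU
      obtain ⟨N, hN⟩ := hcontr {g} isCompact_singleton U hU
      exact Filter.mem_of_superset (Filter.mem_atTop N) (fun m hm => hN m hm g rfl)
    have h1 : Filter.Tendsto (fun n => stmt13P s n (g * (s g)⁻¹)) Filter.atTop (𝓝 g) := by
      have : Filter.Tendsto (fun n => g * ((⇑s)^[n] g)⁻¹) Filter.atTop (𝓝 (g * 1⁻¹)) :=
        (hone.inv).const_mul g
      simp only [inv_one, mul_one] at this
      simpa [tele] using this
    exact tendsto_nhds_unique (hF (g * (s g)⁻¹)) h1
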